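/- arXiv:2108.03663 — 2 statements merged into one kernel-verified Lean document; each statement's English description precedes it below -/
import Mathlib

section
/- Let f be a continuous function on the torus [-π,π] (with endpoints identified) that is strictly positive except at finitely many distinct points E_1,...,E_M, and suppose that for each i there exists β_i > 0 such that the limit lim_{x→E_i, x≠E_i} f(x)/|x−E_i|^{β_i} exists and is strictly positive. Then there exist constants 0 < c ≤ C such that for all x ∈ [-π,π], c·∏_{i=1}^M (2−2cos(x−E_i))^{b/2} ≤ f(x) ≤ C·(2−2cos(x−E_{i_0}))^{b/2}, where b = max_i β_i and i_0 is an index with β_{i_0} = b. -/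
open Real Filter Set


private lemma tsc_nonneg (t : ℝ) : 0 ≤ 2 - 2 * Real.cos t := by
  nlinarith [Real.cos_le_one t]

private lemma tsc_le_four (t : ℝ) : 2 - 2 * Real.cos t ≤ 4 := by
  nlinarith [Real.neg_one_le_cos t]

private lemma tsc_le_sq (t : ℝ) : 2 - 2 * Real.cos t ≤ t ^ 2 := by
  have h1 : Real.sin (t / 2) ^ 2 ≤ (t / 2) ^ 2 := Real.sin_sq_le_sq
  have h2 : Real.sin (t / 2) ^ 2 = 1 / 2 - Real.cos (2 * (t / 2)) / 2 :=
    Real.sin_sq_eq_half_sub (t / 2)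
  rw [show 2 * (t / 2) = t by ring] at h2
  nlinarith

private lemma tsc_ge (t : ℝ) (ht : |t| ≤ π) : (2 / π * |t|) ^ 2 ≤ 2 - 2 * Real.cos t := by
  have hπ : 0 < π := Real.pi_pos
  have h1 : 2 / π * (|t| / 2) ≤ Real.sin (|t| / 2) :=
    Real.mul_le_sin (by positivity) (by linarith)
  have h2 : Real.sin (|t| / 2) ^ 2 = Real.sin (t / 2) ^ 2 := by
    rcases abs_cases t with ⟨h, _⟩ | ⟨h, _⟩
    · rw [h]
    · rw [h, show -t / 2 = -(t / 2) by ring, Real.sin_neg, neg_sq]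
  have h3 : (2 / π * (|t| / 2)) ^ 2 ≤ Real.sin (|t| / 2) ^ 2 :=
    pow_le_pow_left₀ (by positivity) h1 2
  have h4 : Real.sin (t / 2) ^ 2 = 1 / 2 - Real.cos (2 * (t / 2)) / 2 :=
    Real.sin_sq_eq_half_sub (t / 2)
  rw [show 2 * (t / 2) = t by ring] at h4
  nlinarith

private lemma sq_rpow_half (t b : ℝ) : (t ^ 2) ^ (b / 2) = |t| ^ b := by
  rw [← sq_abs t, ← Real.rpow_natCast |t| 2, ← Real.rpow_mul (abs_nonneg t)]
  norm_num
  congr 1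
  ring

private lemma key_upper (t b : ℝ) (hb : 0 ≤ b) :
    (2 - 2 * Real.cos t) ^ (b / 2) ≤ |t| ^ b := by
  calc (2 - 2 * Real.cos t) ^ (b / 2) ≤ (t ^ 2) ^ (b / 2) :=
        Real.rpow_le_rpow (tsc_nonneg t) (tsc_le_sq t) (by positivity)
    _ = |t| ^ b := sq_rpow_half t b

private lemma key_lower (t b : ℝ) (hb : 0 ≤ b) (ht : |t| ≤ π) :
    (2 / π) ^ b * |t| ^ b ≤ (2 - 2 * Real.cos t) ^ (b / 2) := by
  have hπ : 0 < π := Real.pi_pos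
  have h1 : ((2 / π * |t|) ^ 2) ^ (b / 2) = (2 / π) ^ b * |t| ^ b := by
    rw [sq_rpow_half, abs_of_nonneg (show (0:ℝ) ≤ 2 / π * |t| by positivity),
      Real.mul_rpow (show (0:ℝ) ≤ 2 / π by positivity) (abs_nonneg t)]
  rw [← h1]
  exact Real.rpow_le_rpow (by positivity) (tsc_ge t ht) (by positivity)

private lemma glob {K : Set ℝ} (hK : IsCompact K) {f g : ℝ → ℝ} (hg : ∀ x ∈ K, 0 ≤ g x)
    (h : ∀ x ∈ K, ∃ c : ℝ, 0 < c ∧ ∀ᶠ y in nhds x, c * g y ≤ f y) :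
    ∃ c : ℝ, 0 < c ∧ ∀ x ∈ K, c * g x ≤ f x := by
  choose! c hc hev using h
  obtain ⟨t, htK, hcov⟩ := hK.elim_nhds_subcover (fun x => {y | c x * g y ≤ f y})
    (fun x hx => hev x hx)
  rcases t.eq_empty_or_nonempty with rfl | ht
  · exact ⟨1, one_pos, fun x hx => by simpa using hcov hx⟩
  · refine ⟨t.inf' ht c, ?_, fun x hx => ?_⟩
    · exact (Finset.lt_inf'_iff ht).mpr fun z hz => hc z (htK z hz)
    · obtain ⟨z, hz, hxz⟩ := Set.mem_iUnion₂.mp (hcov hx)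
      calc t.inf' ht c * g x ≤ c z * g x :=
            mul_le_mul_of_nonneg_right (Finset.inf'_le c hz) (hg x hx)
        _ ≤ f x := hxz

/-- Upper and lower bounds on a symbol `f` on the torus `[-π,π]` that vanishes exactly at
finitely many points `E_1,...,E_M`, with algebraic minima of orders `β_i`:
`c ∏_i (2-2cos(x-E_i))^{b/2} ≤ f(x) ≤ C (2-2cos(x-E_{i_0}))^{b/2}` where `b = max_i β_i`. -/
theorem symbol_upper_lower_bound {M : ℕ} (f : ℝ → ℝ)
    (hper : Function.Periodic f (2 * π)) (hcont : Continuous f)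
    (E : Fin M → ℝ) (hE : Function.Injective E) (hErange : ∀ i, E i ∈ Ico (-π) π)
    (hzero : ∀ i, f (E i) = 0)
    (hpos : ∀ x ∈ Icc (-π) π, x ∉ Set.range E → 0 < f x)
    (β : Fin M → ℝ) (hβpos : ∀ i, 0 < β i)
    (c' : Fin M → ℝ) (hc'pos : ∀ i, 0 < c' i)
    (hlim : ∀ i, Tendsto (fun x => f x / |x - E i| ^ (β i)) (nhdsWithin (E i) {E i}ᶜ)
      (nhds (c' i)))
    (b : ℝ) (i0 : Fin M) (hb : β i0 = b) (hmax : ∀ i, β i ≤ b) :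
    ∃ c C : ℝ, 0 < c ∧ c ≤ C ∧ ∀ x ∈ Icc (-π) π,
      c * ∏ i, (2 - 2 * Real.cos (x - E i)) ^ (b / 2) ≤ f x ∧
      f x ≤ C * (2 - 2 * Real.cos (x - E i0)) ^ (b / 2) := by
  have hπ : 0 < π := Real.pi_pos
  have hb0 : 0 < b := hb ▸ hβpos i0
  set G : ℝ → ℝ := fun x => ∏ i, (2 - 2 * Real.cos (x - E i)) ^ (b / 2) with hGdef
  set H : ℝ → ℝ := fun x => (2 - 2 * Real.cos (x - E i0)) ^ (b / 2) with hHdef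
  have hGnonneg : ∀ x, 0 ≤ G x := fun x =>
    Finset.prod_nonneg fun i _ => Real.rpow_nonneg (tsc_nonneg _) _
  have hHnonneg : ∀ x, 0 ≤ H x := fun x => Real.rpow_nonneg (tsc_nonneg _) _
  have hbasecont : ∀ e : ℝ, Continuous fun x => (2 - 2 * Real.cos (x - e)) ^ (b / 2) := by
    intro e
    exact (by fun_prop : Continuous fun x => 2 - 2 * Real.cos (x - e)).rpow_const
      fun x => Or.inr (by positivity)
  have hGcont : Continuous G := continuous_finset_prod _ fun i _ => hbasecont (E i)
  have hHcont : Continuous H := hbasecont (E i0)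
  have hGzero : ∀ i, G (E i) = 0 := by
    intro i
    apply Finset.prod_eq_zero (Finset.mem_univ i)
    rw [sub_self, Real.cos_zero]
    norm_num
    exact Real.zero_rpow (by positivity)
  have hfnn : ∀ x ∈ Icc (-π) π, 0 ≤ f x := by
    intro x hx
    by_cases h : x ∈ Set.range E
    · obtain ⟨j, rfl⟩ := h; exact (hzero j).ge
    · exact (hpos x hx h).le
  -- local lower bound near each E i
  have locLower : ∀ i : Fin M, ∃ c : ℝ, 0 < c ∧ ∀ᶠ y in nhds (E i), c * G y ≤ f y := by
    intro i
    set A : ℝ := ((4 : ℝ) ^ (b / 2)) ^ M with hAdef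
    have hA1 : (1 : ℝ) ≤ (4 : ℝ) ^ (b / 2) := Real.one_le_rpow (by norm_num) (by positivity)
    have hApos : 0 < A := by positivity
    refine ⟨c' i / (2 * A), div_pos (hc'pos i) (by positivity), ?_⟩
    have hev1 : ∀ᶠ y in nhdsWithin (E i) {E i}ᶜ, c' i / 2 < f y / |y - E i| ^ (β i) :=
      (hlim i).eventually (eventually_gt_nhds (by linarith [hc'pos i]))
    have hev2 : ∀ᶠ y in nhds (E i), |y - E i| < 1 := eventually_abs_sub_lt _ one_pos
    rw [← nhdsNE_sup_pure, eventually_sup]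
    constructor
    · filter_upwards [hev1, hev2.filter_mono nhdsWithin_le_nhds, self_mem_nhdsWithin]
        with y h1 h2 hy
      have ht0 : y - E i ≠ 0 := sub_ne_zero.mpr hy
      have htpos : 0 < |y - E i| := abs_pos.mpr ht0
      have hp : 0 < |y - E i| ^ (β i) := Real.rpow_pos_of_pos htpos _
      have hfy : c' i / 2 * |y - E i| ^ (β i) ≤ f y := ((lt_div_iff₀ hp).mp h1).le
      have hGy : G y ≤ A * |y - E i| ^ (β i) := by
        have hsplit : G y = (2 - 2 * Real.cos (y - E i)) ^ (b / 2) *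
            ∏ j ∈ Finset.univ.erase i, (2 - 2 * Real.cos (y - E j)) ^ (b / 2) :=
          (Finset.mul_prod_erase Finset.univ _ (Finset.mem_univ i)).symm
        have hrest : ∏ j ∈ Finset.univ.erase i, (2 - 2 * Real.cos (y - E j)) ^ (b / 2) ≤ A := by
          calc ∏ j ∈ Finset.univ.erase i, (2 - 2 * Real.cos (y - E j)) ^ (b / 2)
              ≤ ∏ _j ∈ Finset.univ.erase i, (4 : ℝ) ^ (b / 2) :=
                Finset.prod_le_prod (fun j _ => Real.rpow_nonneg (tsc_nonneg _) _)
                  (fun j _ => Real.rpow_le_rpow (tsc_nonneg _) (tsc_le_four _) (by positivity))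
            _ = ((4 : ℝ) ^ (b / 2)) ^ (Finset.univ.erase i).card := Finset.prod_const _
            _ ≤ A := pow_le_pow_right₀ hA1
                ((Finset.card_le_card (Finset.erase_subset _ _)).trans_eq (by simp))
        have hfac : (2 - 2 * Real.cos (y - E i)) ^ (b / 2) ≤ |y - E i| ^ (β i) :=
          (key_upper _ b hb0.le).trans
            (Real.rpow_le_rpow_of_exponent_ge htpos h2.le (hmax i))
        calc G y = (2 - 2 * Real.cos (y - E i)) ^ (b / 2) *
              ∏ j ∈ Finset.univ.erase i, (2 - 2 * Real.cos (y - E j)) ^ (b / 2) := hsplit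
          _ ≤ |y - E i| ^ (β i) * A :=
              mul_le_mul hfac hrest
                (Finset.prod_nonneg fun j _ => Real.rpow_nonneg (tsc_nonneg _) _) hp.le
          _ = A * |y - E i| ^ (β i) := mul_comm _ _
      calc c' i / (2 * A) * G y ≤ c' i / (2 * A) * (A * |y - E i| ^ (β i)) :=
            mul_le_mul_of_nonneg_left hGy (div_pos (hc'pos i) (by positivity)).le
        _ = c' i / 2 * |y - E i| ^ (β i) := by field_simp
        _ ≤ f y := hfy
    · rw [eventually_pure]
      rw [hGzero i, hzero i, mul_zero]
  -- local upper bound near E i0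
  have locUpper : ∃ c : ℝ, 0 < c ∧ ∀ᶠ y in nhds (E i0), c * f y ≤ H y := by
    refine ⟨(2 / π) ^ b / (2 * c' i0), div_pos (by positivity) (by linarith [hc'pos i0]), ?_⟩
    have hev1 : ∀ᶠ y in nhdsWithin (E i0) {E i0}ᶜ, f y / |y - E i0| ^ (β i0) < 2 * c' i0 :=
      (hlim i0).eventually (eventually_lt_nhds (by linarith [hc'pos i0]))
    have hev2 : ∀ᶠ y in nhds (E i0), |y - E i0| < π := eventually_abs_sub_lt _ hπ
    rw [← nhdsNE_sup_pure, eventually_sup]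
    constructor
    · filter_upwards [hev1, hev2.filter_mono nhdsWithin_le_nhds, self_mem_nhdsWithin]
        with y h1 h2 hy
      have ht0 : y - E i0 ≠ 0 := sub_ne_zero.mpr hy
      have htpos : 0 < |y - E i0| := abs_pos.mpr ht0
      have hp : 0 < |y - E i0| ^ (β i0) := Real.rpow_pos_of_pos htpos _
      have hfy : f y ≤ 2 * c' i0 * |y - E i0| ^ b := by
        have := ((div_lt_iff₀ hp).mp h1).le
        rwa [hb] at this
      have hHy : (2 / π) ^ b * |y - E i0| ^ b ≤ H y := key_lower _ b hb0.le h2.le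
      calc (2 / π) ^ b / (2 * c' i0) * f y
          ≤ (2 / π) ^ b / (2 * c' i0) * (2 * c' i0 * |y - E i0| ^ b) :=
            mul_le_mul_of_nonneg_left hfy
              (div_pos (by positivity) (by linarith [hc'pos i0])).le
        _ = (2 / π) ^ b * |y - E i0| ^ b := by
            have : (0:ℝ) < 2 * c' i0 := by linarith [hc'pos i0]
            field_simp
            exact mul_inv_cancel₀ (hc'pos i0).ne'
        _ ≤ H y := hHy
    · rw [eventually_pure, hzero i0, mul_zero]
      exact hHnonneg _
  -- periodicity of G and H
  have hGper : ∀ y, G (y - 2 * π) = G y := by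
    intro y
    apply Finset.prod_congr rfl
    intro k _
    rw [show y - 2 * π - E k = y - E k - 2 * π by ring, Real.cos_sub_two_pi]
  have hHper : ∀ y, H (y - 2 * π) = H y := by
    intro y
    simp only [hHdef]
    rw [show y - 2 * π - E i0 = y - E i0 - 2 * π by ring, Real.cos_sub_two_pi]
  have htrans : ∀ j : Fin M, E j = -π → Tendsto (fun y : ℝ => y - 2 * π) (nhds π) (nhds (E j)) := by
    intro j hEj
    have h := (continuous_sub_right (2 * π)).tendsto π
    rw [show π - 2 * π = E j by rw [hEj]; ring] at h
    exact h
  -- classification of zeros of the factors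
  have hclass : ∀ x ∈ Icc (-π) π, ∀ j : Fin M, 2 - 2 * Real.cos (x - E j) = 0 →
      x = E j ∨ (x = π ∧ E j = -π) := by
    intro x hx j hcos
    have h1 : Real.cos (x - E j) = 1 := by linarith
    have hEj := hErange j
    have hub : x - E j ≤ 2 * π := by
      have := hx.2; have := hEj.1; linarith
    rcases eq_or_lt_of_le hub with heq | hlt
    · right
      have := hx.2; have := hEj.1
      constructor <;> linarith
    · left
      have hlb : -(2 * π) < x - E j := by
        have := hx.1; have := hEj.2; linarith
      have := (Real.cos_eq_one_iff_of_lt_of_lt hlb hlt).mp h1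
      linarith
  -- global local lower claims
  have locAllLow : ∀ x ∈ Icc (-π) π, ∃ c : ℝ, 0 < c ∧ ∀ᶠ y in nhds x, c * G y ≤ f y := by
    intro x hx
    by_cases hGx : G x = 0
    · obtain ⟨j, -, hj⟩ := Finset.prod_eq_zero_iff.mp hGx
      have hbase0 : 2 - 2 * Real.cos (x - E j) = 0 :=
        ((Real.rpow_eq_zero_iff_of_nonneg (tsc_nonneg _)).mp hj).1
      rcases hclass x hx j hbase0 with rfl | ⟨rfl, hEj⟩
      · exact locLower j
      · obtain ⟨c, hc, hev⟩ := locLower j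
        refine ⟨c, hc, ?_⟩
        filter_upwards [(htrans j hEj).eventually hev] with y hy
        rwa [hGper, hper.sub_eq] at hy
    · have hGpos : 0 < G x := (hGnonneg x).lt_of_ne (Ne.symm hGx)
      have hxE : x ∉ Set.range E := by
        rintro ⟨j, rfl⟩; exact hGx (hGzero j)
      have hfx : 0 < f x := hpos x hx hxE
      refine ⟨f x / (4 * G x), by positivity, ?_⟩
      have h1 : ∀ᶠ y in nhds x, f x / 2 < f y :=
        hcont.continuousAt.eventually (eventually_gt_nhds (half_lt_self hfx))
      have h2 : ∀ᶠ y in nhds x, G y < 2 * G x :=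
        hGcont.continuousAt.eventually (eventually_lt_nhds (by linarith))
      filter_upwards [h1, h2] with y hy1 hy2
      have hle : f x / (4 * G x) * G y ≤ f x / (4 * G x) * (2 * G x) :=
        mul_le_mul_of_nonneg_left hy2.le (by positivity)
      have heq : f x / (4 * G x) * (2 * G x) = f x / 2 := by field_simp; ring
      linarith
  -- global local upper claims
  have locAllUp : ∀ x ∈ Icc (-π) π, ∃ c : ℝ, 0 < c ∧ ∀ᶠ y in nhds x, c * f y ≤ H y := by
    intro x hx
    by_cases hHx : H x = 0
    · have hbase0 : 2 - 2 * Real.cos (x - E i0) = 0 :=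
        ((Real.rpow_eq_zero_iff_of_nonneg (tsc_nonneg _)).mp hHx).1
      rcases hclass x hx i0 hbase0 with rfl | ⟨rfl, hEj⟩
      · exact locUpper
      · obtain ⟨c, hc, hev⟩ := locUpper
        refine ⟨c, hc, ?_⟩
        filter_upwards [(htrans i0 hEj).eventually hev] with y hy
        rwa [hHper, hper.sub_eq] at hy
    · have hHpos : 0 < H x := (hHnonneg x).lt_of_ne (Ne.symm hHx)
      have hfx : 0 ≤ f x := hfnn x hx
      refine ⟨(H x / 2) / (f x + 1), by positivity, ?_⟩
      have h1 : ∀ᶠ y in nhds x, f y < f x + 1 :=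
        hcont.continuousAt.eventually (eventually_lt_nhds (lt_add_one _))
      have h2 : ∀ᶠ y in nhds x, H x / 2 < H y :=
        hHcont.continuousAt.eventually (eventually_gt_nhds (half_lt_self hHpos))
      filter_upwards [h1, h2] with y hy1 hy2
      have hle : (H x / 2) / (f x + 1) * f y ≤ (H x / 2) / (f x + 1) * (f x + 1) :=
        mul_le_mul_of_nonneg_left hy1.le (by positivity)
      have heq : (H x / 2) / (f x + 1) * (f x + 1) = H x / 2 := by
        field_simp
      linarith
  obtain ⟨c, hc, hlow⟩ := glob isCompact_Icc (fun x _ => hGnonneg x) locAllLow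
  obtain ⟨c₂, hc₂, hup⟩ := glob isCompact_Icc hfnn locAllUp
  refine ⟨c, max (1 / c₂) c, hc, le_max_right _ _, ?_⟩
  intro x hx
  constructor
  · exact hlow x hx
  · have h1 : f x ≤ (1 / c₂) * H x := by
      have := hup x hx
      rw [div_mul_eq_mul_div, le_div_iff₀ hc₂, one_mul]
      linarith [this]
    calc f x ≤ (1 / c₂) * H x := h1
      _ ≤ max (1 / c₂) c * H x :=
        mul_le_mul_of_nonneg_right (le_max_left _ _) (hHnonneg x)
end

section
/- Let T be a bounded self-adjoint positive operator on ℓ²(ℤ), Λ ⊂ ℤ, and suppose N ≤ T ≤ D where N = N₁ ⊕ N₂ and D = D₁ ⊕ D₂ are block-diagonal with respect to ℓ²(Λ) ⊕ ℓ²(Λᶜ), with N positive. Then for every β ∈ (0,1], N₁^β ≤ 1_Λ T^β 1_Λ ≤ D₁^β as operators on ℓ²(Λ). -/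
open Set

instance : ContinuousFunctionalCalculus ℝ (lp (fun _ : ℤ => ℂ) 2 →L[ℂ] lp (fun _ : ℤ => ℂ) 2)
    IsSelfAdjoint :=
  IsSelfAdjoint.instContinuousFunctionalCalculus

section LoewnerHeinzAux
open Filter


open Polynomial in
lemma aeval_mul_idem {A : Type*} [Ring A] [Algebra ℝ A] {a p : A}
    (hp2 : p * p = p) (hpa : a * p = p * a) (Q : ℝ[X]) (hQ0 : Q.coeff 0 = 0) :
    aeval (a * p) Q = p * aeval a Q * p := by
  have hc : Commute a p := hpa
  have hidem : IsIdempotentElem p := hp2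
  have lemA : ∀ R : ℝ[X], aeval (a * p) R * p = aeval a R * p := by
    intro R
    induction R using Polynomial.induction_on' with
    | add f g hf hg => simp only [map_add, add_mul, hf, hg]
    | monomial n c =>
      simp only [aeval_monomial]
      rw [mul_assoc, mul_assoc, hc.mul_pow]
      congr 1
      rw [mul_assoc, ← pow_succ, hidem.pow_succ_eq]
  have lemB : ∀ R : ℝ[X], Commute p (aeval a R) := by
    intro R
    induction R using Polynomial.induction_on' with
    | add f g hf hg => simpa only [map_add] using hf.add_right hg
    | monomial n c =>
      simp only [aeval_monomial]
      exact Commute.mul_right (Algebra.commutes c p).symm (hc.symm.pow_right n)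
  have hpq : p * (a * p) = (a * p) * p := by
    rw [← mul_assoc, ← hpa]
  have lemC : ∀ R : ℝ[X], Commute p (aeval (a * p) R) := by
    intro R
    induction R using Polynomial.induction_on' with
    | add f g hf hg => simpa only [map_add] using hf.add_right hg
    | monomial n c =>
      simp only [aeval_monomial]
      exact Commute.mul_right (Algebra.commutes c p).symm ((Commute.pow_right hpq n))
  have hQX : Polynomial.X * Q.divX = Q := by
    have := Polynomial.X_mul_divX_add Q
    rwa [hQ0, Polynomial.C_0, add_zero] at this
  have key : aeval (a * p) Q = aeval (a * p) Q * p := by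
    conv_lhs => rw [← hQX]
    conv_rhs => rw [← hQX]
    rw [map_mul, Polynomial.aeval_X]
    set S := aeval (a * p) Q.divX with hS
    have hpS : p * S = S * p := lemC Q.divX
    have hqp : (a * p) * p = a * p := by rw [mul_assoc, hp2]
    conv_rhs => rw [mul_assoc (a * p) S p, ← hpS, ← mul_assoc, hqp]
  rw [key, lemA Q]
  conv_rhs => rw [(lemB Q).eq, mul_assoc, hp2]

section CStar

variable {A : Type*} [CStarAlgebra A] [PartialOrder A] [StarOrderedRing A]

lemma cfc_poly_eval (Q : Polynomial ℝ) (x : A) (hx : IsSelfAdjoint x) :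
    cfc (fun t : ℝ => Q.eval t) x = Polynomial.aeval x Q := by
  induction Q using Polynomial.induction_on' with
  | add f g hf hg =>
    simp only [Polynomial.eval_add, map_add]
    rw [cfc_add x _ _ (f.continuous.continuousOn) (g.continuous.continuousOn), hf, hg]
  | monomial n c =>
    simp only [Polynomial.eval_monomial, Polynomial.aeval_monomial]
    have h1 : (fun t : ℝ => c * t ^ n) = (fun t : ℝ => c • (t ^ n)) := by
      simp [smul_eq_mul]
    rw [h1, cfc_smul c (fun t : ℝ => t ^ n) x ((continuous_pow n).continuousOn)]
    have h2 : cfc (fun t : ℝ => t ^ n) x = x ^ n := by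
      have h3 : (fun t : ℝ => t ^ n) = (fun t : ℝ => (id t) ^ n) := rfl
      rw [h3, cfc_pow (id : ℝ → ℝ) n x, cfc_id ℝ x]
    rw [h2, Algebra.smul_def]

lemma spectralRadius_diff_zero (a : A) :
    spectralRadius ℂ a = ⨆ k ∈ spectrum ℂ a \ {0}, (‖k‖₊ : ENNReal) := by
  rw [spectralRadius]
  apply le_antisymm
  · refine iSup₂_le fun k hk => ?_
    by_cases h0 : k = 0
    · simp [h0]
    · exact le_iSup₂ (f := fun k _ => (‖k‖₊ : ENNReal)) k ⟨hk, h0⟩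
  · exact iSup₂_le fun k hk => le_iSup₂ (f := fun k _ => (‖k‖₊ : ENNReal)) k hk.1

lemma spectralRadius_mul_comm (a b : A) :
    spectralRadius ℂ (a * b) = spectralRadius ℂ (b * a) := by
  rw [spectralRadius_diff_zero, spectralRadius_diff_zero,
    spectrum.nonzero_mul_comm]

lemma abs_exp_sub_exp_le {x y M : ℝ} (hx : |x| ≤ M) (hy : |y| ≤ M) :
    |Real.exp x - Real.exp y| ≤ |x - y| * Real.exp M := by
  wlog hxy : y ≤ x generalizing x y
  · rw [abs_sub_comm, abs_sub_comm x y]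
    exact this hy hx (le_of_not_ge hxy)
  have h1 : Real.exp y ≤ Real.exp x := Real.exp_le_exp.mpr hxy
  rw [abs_of_nonneg (by linarith), abs_of_nonneg (by linarith)]
  have hs : 0 ≤ x - y := by linarith
  have key : Real.exp x - Real.exp y ≤ (x - y) * Real.exp x := by
    have h2 : 1 - (x - y) ≤ Real.exp (-(x - y)) := by
      linarith [Real.add_one_le_exp (-(x - y))]
    have h3 : Real.exp x * (1 - (x - y)) ≤ Real.exp x * Real.exp (-(x - y)) := by
      exact mul_le_mul_of_nonneg_left h2 (Real.exp_pos x).le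
    rw [← Real.exp_add] at h3
    have h4 : x + -(x - y) = y := by ring
    rw [h4] at h3
    nlinarith [Real.exp_pos x]
  have hxM : Real.exp x ≤ Real.exp M := Real.exp_le_exp.mpr (le_trans (le_abs_self x) hx)
  calc Real.exp x - Real.exp y ≤ (x - y) * Real.exp x := key
  _ ≤ (x - y) * Real.exp M := mul_le_mul_of_nonneg_left hxM hs

lemma rpow_eq_cfc_real {a : A} (ha : 0 ≤ a) {β : ℝ} (hβ : β ≠ 0) :
    a ^ β = cfc (fun t : ℝ => t ^ β) a := by
  rw [CFC.rpow_def, cfc_nnreal_eq_real _ a ha]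
  apply cfc_congr
  intro x hx
  have hx0 : 0 ≤ x := spectrum_nonneg_of_nonneg ha hx
  simp only [NNReal.coe_rpow, Real.coe_toNNReal x hx0]

end CStar

lemma lp_proj_selfAdjoint_idem (Λ : Set ℤ) (P : lp (fun _ : ℤ => ℂ) 2 →L[ℂ] lp (fun _ : ℤ => ℂ) 2)
    (hP : ∀ (x : lp (fun _ : ℤ => ℂ) 2) (n : ℤ), P x n = Λ.indicator (fun m => x m) n) :
    IsSelfAdjoint P ∧ P * P = P := by
  constructor
  · rw [ContinuousLinearMap.isSelfAdjoint_iff_isSymmetric]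
    intro x y
    rw [lp.inner_eq_tsum, lp.inner_eq_tsum]
    apply tsum_congr
    intro n
    simp only [RCLike.inner_apply, ContinuousLinearMap.coe_coe]
    rw [hP x n, hP y n]
    simp only [Set.indicator_apply]
    by_cases hn : n ∈ Λ <;> simp [hn]
  · ext x n
    rw [ContinuousLinearMap.mul_apply]
    rw [hP (P x) n, hP x n]
    simp only [Set.indicator_apply]
    by_cases hn : n ∈ Λ <;> simp [hn, hP x n, Set.indicator_apply]

section CStar
variable {A : Type*} [CStarAlgebra A] [PartialOrder A] [StarOrderedRing A] [Nontrivial A]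

lemma spectralRadius_diff_zero' (a : A) :
    spectralRadius ℂ a = ⨆ k ∈ spectrum ℂ a \ {0}, (‖k‖₊ : ENNReal) := by
  rw [spectralRadius]
  apply le_antisymm
  · refine iSup₂_le fun k hk => ?_
    by_cases h0 : k = 0
    · simp [h0]
    · exact le_iSup₂ (f := fun k _ => (‖k‖₊ : ENNReal)) k ⟨hk, h0⟩
  · exact iSup₂_le fun k hk => le_iSup₂ (f := fun k _ => (‖k‖₊ : ENNReal)) k hk.1

lemma spectralRadius_mul_comm' (a b : A) :
    spectralRadius ℂ (a * b) = spectralRadius ℂ (b * a) := by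
  rw [spectralRadius_diff_zero', spectralRadius_diff_zero',
    spectrum.nonzero_mul_comm]

lemma isUnit_rpow {b : A} (hb : 0 ≤ b) (hbu : IsUnit b) (x : ℝ) : IsUnit (b ^ x) := by
  have h0b : 0 ∉ spectrum NNReal b := (spectrum.zero_notMem_iff NNReal).mpr hbu
  exact ⟨⟨b ^ x, b ^ (-x),
    by rw [← CFC.rpow_add hbu, add_neg_cancel, CFC.rpow_zero b hb],
    by rw [← CFC.rpow_add hbu, neg_add_cancel, CFC.rpow_zero b hb]⟩, rfl⟩

lemma norm_rpow_half_mul_le_one {a b : A} (ha : 0 ≤ a) (hb : 0 ≤ b) (hau : IsUnit a)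
    (hbu : IsUnit b) {x : ℝ} (hx : 0 ≤ x) (hxab : a ^ x ≤ b ^ x) :
    ‖a ^ (x / 2) * b ^ (-(x / 2))‖ ≤ 1 := by
  have h0a : 0 ∉ spectrum NNReal a := (spectrum.zero_notMem_iff NNReal).mpr hau
  have h0b : 0 ∉ spectrum NNReal b := (spectrum.zero_notMem_iff NNReal).mpr hbu
  rcases eq_or_lt_of_le hx with rfl | hx0
  · norm_num [CFC.rpow_zero a ha, CFC.rpow_zero b hb]
  · have hbxu : IsUnit (b ^ x) := isUnit_rpow hb hbu x
    have := (le_iff_norm_sqrt_mul_rpow (a ^ x) (b ^ x) CFC.rpow_nonneg (hbxu.isStrictlyPositive CFC.rpow_nonneg)).mp hxab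
    rwa [CFC.sqrt_rpow hau hx0.ne', CFC.rpow_rpow b x (-(1/2)) hx0.ne' (hbu.isStrictlyPositive hb),
      show x * -(1/2) = -(x/2) by ring] at this

lemma rpow_le_rpow_midpoint {α γ : ℝ} (hα : 0 ≤ α) (hγ : 0 ≤ γ)
    {a b : A} (ha : 0 ≤ a) (hb : 0 ≤ b) (hau : IsUnit a) (hbu : IsUnit b) (hab : a ≤ b)
    (Hα : a ^ α ≤ b ^ α) (Hγ : a ^ γ ≤ b ^ γ) :
    a ^ ((α + γ) / 2) ≤ b ^ ((α + γ) / 2) := by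
  have h0a : 0 ∉ spectrum NNReal a := (spectrum.zero_notMem_iff NNReal).mpr hau
  have h0b : 0 ∉ spectrum NNReal b := (spectrum.zero_notMem_iff NNReal).mpr hbu
  set δ : ℝ := (α + γ) / 2 with hδdef
  rcases eq_or_ne δ 0 with hδ0 | hδ0
  · rw [hδ0, CFC.rpow_zero a ha, CFC.rpow_zero b hb]
  have hu : ‖a ^ (γ/2) * b ^ (-(γ/2))‖ ≤ 1 :=
    norm_rpow_half_mul_le_one ha hb hau hbu hγ Hγ
  have hv : ‖a ^ (α/2) * b ^ (-(α/2))‖ ≤ 1 :=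
    norm_rpow_half_mul_le_one ha hb hau hbu hα Hα
  have hbδu : IsUnit (b ^ δ) := isUnit_rpow hb hbu δ
  rw [le_iff_norm_sqrt_mul_rpow (a ^ δ) (b ^ δ) CFC.rpow_nonneg (hbδu.isStrictlyPositive CFC.rpow_nonneg),
    CFC.sqrt_rpow hau hδ0, CFC.rpow_rpow b δ (-(1/2)) hδ0 (hbu.isStrictlyPositive hb),
    show δ * -(1/2) = -(δ/2) by ring]
  set w : A := a ^ (δ/2) * b ^ (-(δ/2)) with hwdef
  rw [← sq_le_one_iff₀ (norm_nonneg w), sq, ← CStarRing.norm_star_mul_self]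
  have hsw : star w = b ^ (-(δ/2)) * a ^ (δ/2) := by
    rw [hwdef, star_mul, (IsSelfAdjoint.of_nonneg CFC.rpow_nonneg).star_eq,
      (IsSelfAdjoint.of_nonneg CFC.rpow_nonneg).star_eq]
  have hzsa : IsSelfAdjoint (star w * w) := IsSelfAdjoint.star_mul_self w
  have hz : star w * w = b ^ (-(δ/2)) * (a ^ δ * b ^ (-(δ/2))) := by
    rw [hsw, hwdef, mul_assoc, ← mul_assoc (a ^ (δ/2)), ← CFC.rpow_add hau,
      show δ/2 + δ/2 = δ by ring]
  have h1 : (‖star w * w‖₊ : ENNReal) = spectralRadius ℂ (star w * w) :=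
    (hzsa.spectralRadius_eq_nnnorm).symm
  have h2 : spectralRadius ℂ (star w * w) = spectralRadius ℂ (a ^ δ * b ^ (-δ)) := by
    rw [hz, spectralRadius_mul_comm', mul_assoc, ← CFC.rpow_add hbu,
      show -(δ/2) + -(δ/2) = -δ by ring]
  have hds : a ^ δ = a ^ (α/2) * a ^ (γ/2) := by
    rw [← CFC.rpow_add hau, show α/2 + γ/2 = δ by rw [hδdef]; ring]
  have hbs : b ^ (-δ) = b ^ (-(γ/2)) * b ^ (-(α/2)) := by
    rw [← CFC.rpow_add hbu, show -(γ/2) + -(α/2) = -δ by rw [hδdef]; ring]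
  have h3 : spectralRadius ℂ (a ^ δ * b ^ (-δ))
      = spectralRadius ℂ ((a ^ (γ/2) * b ^ (-(γ/2)) * b ^ (-(α/2))) * a ^ (α/2)) := by
    rw [hds, hbs, mul_assoc (a ^ (α/2)), spectralRadius_mul_comm' (a ^ (α/2))]
    congr 1
    simp only [mul_assoc]
  have h4 : spectralRadius ℂ ((a ^ (γ/2) * b ^ (-(γ/2)) * b ^ (-(α/2))) * a ^ (α/2))
      ≤ (‖(a ^ (γ/2) * b ^ (-(γ/2))) * (b ^ (-(α/2)) * a ^ (α/2))‖₊ : ENNReal) := by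
    rw [show (a ^ (γ/2) * b ^ (-(γ/2)) * b ^ (-(α/2))) * a ^ (α/2)
      = (a ^ (γ/2) * b ^ (-(γ/2))) * (b ^ (-(α/2)) * a ^ (α/2)) by rw [mul_assoc, mul_assoc]]
    exact spectrum.spectralRadius_le_nnnorm (𝕜 := ℂ) _
  have h5 : ‖(a ^ (γ/2) * b ^ (-(γ/2))) * (b ^ (-(α/2)) * a ^ (α/2))‖ ≤ 1 := by
    have hsv : b ^ (-(α/2)) * a ^ (α/2) = star (a ^ (α/2) * b ^ (-(α/2))) := by
      rw [star_mul, (IsSelfAdjoint.of_nonneg CFC.rpow_nonneg).star_eq,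
        (IsSelfAdjoint.of_nonneg CFC.rpow_nonneg).star_eq]
    calc ‖(a ^ (γ/2) * b ^ (-(γ/2))) * (b ^ (-(α/2)) * a ^ (α/2))‖
        ≤ ‖a ^ (γ/2) * b ^ (-(γ/2))‖ * ‖b ^ (-(α/2)) * a ^ (α/2)‖ := norm_mul_le _ _
      _ ≤ 1 * 1 := by
          apply mul_le_mul hu ?_ (norm_nonneg _) zero_le_one
          rw [hsv, norm_star]
          exact hv
      _ = 1 := one_mul 1
  have h6 : (‖star w * w‖₊ : ENNReal) ≤ 1 := by
    rw [h1, h2, h3]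
    refine h4.trans ?_
    rw [show (1 : ENNReal) = ((1 : NNReal) : ENNReal) by norm_num]
    exact_mod_cast (by exact_mod_cast h5 : ‖(a ^ (γ/2) * b ^ (-(γ/2))) * (b ^ (-(α/2)) * a ^ (α/2))‖₊ ≤ (1 : NNReal))
  have h7 : ‖star w * w‖₊ ≤ 1 := by exact_mod_cast h6
  exact_mod_cast h7

lemma rpow_le_rpow_dyadic (n : ℕ) : ∀ k : ℕ, k ≤ 2 ^ n →
    ∀ a b : A, 0 ≤ a → 0 ≤ b → IsUnit a → IsUnit b → a ≤ b →
    a ^ ((k : ℝ) / 2 ^ n) ≤ b ^ ((k : ℝ) / 2 ^ n) := by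
  induction n with
  | zero =>
    intro k hk a b ha hb hau hbu hab
    interval_cases k
    · norm_num [CFC.rpow_zero a ha, CFC.rpow_zero b hb]
    · norm_num [CFC.rpow_one a ha, CFC.rpow_one b hb, hab]
  | succ n ih =>
    intro k hk a b ha hb hau hbu hab
    have hpow : (2 : ℕ) ^ (n + 1) = 2 * 2 ^ n := by ring
    have h1 : k / 2 ≤ 2 ^ n := by omega
    have h2 : k - k / 2 ≤ 2 ^ n := by omega
    have hsum : (k / 2 : ℕ) + (k - k / 2) = k := by omega
    have e : (k : ℝ) / 2 ^ (n + 1)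
        = (((k / 2 : ℕ) : ℝ) / 2 ^ n + (((k - k / 2 : ℕ)) : ℝ) / 2 ^ n) / 2 := by
      have hc : ((k / 2 : ℕ) : ℝ) + ((k - k / 2 : ℕ) : ℝ) = (k : ℝ) := by
        exact_mod_cast congrArg (Nat.cast : ℕ → ℝ) hsum
      field_simp
      rw [← hc]
      ring
    rw [e]
    exact rpow_le_rpow_midpoint (by positivity) (by positivity) ha hb hau hbu hab
      (ih _ h1 a b ha hb hau hbu hab) (ih _ h2 a b ha hb hau hbu hab)

end CStar

section CStar
variable {A : Type*} [CStarAlgebra A] [PartialOrder A] [StarOrderedRing A] [Nontrivial A]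

lemma abs_exp_sub_exp_le' {x y M : ℝ} (hx : |x| ≤ M) (hy : |y| ≤ M) :
    |Real.exp x - Real.exp y| ≤ |x - y| * Real.exp M := by
  wlog hxy : y ≤ x generalizing x y
  · rw [abs_sub_comm, abs_sub_comm x y]
    exact this hy hx (le_of_not_ge hxy)
  have h1 : Real.exp y ≤ Real.exp x := Real.exp_le_exp.mpr hxy
  rw [abs_of_nonneg (by linarith), abs_of_nonneg (by linarith)]
  have key : Real.exp x - Real.exp y ≤ (x - y) * Real.exp x := by
    have h2 : 1 - (x - y) ≤ Real.exp (-(x - y)) := by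
      linarith [Real.add_one_le_exp (-(x - y))]
    have h3 : Real.exp x * (1 - (x - y)) ≤ Real.exp x * Real.exp (-(x - y)) :=
      mul_le_mul_of_nonneg_left h2 (Real.exp_pos x).le
    rw [← Real.exp_add, show x + -(x - y) = y by ring] at h3
    nlinarith [Real.exp_pos x]
  have hxM : Real.exp x ≤ Real.exp M := Real.exp_le_exp.mpr (le_trans (le_abs_self x) hx)
  calc Real.exp x - Real.exp y ≤ (x - y) * Real.exp x := key
  _ ≤ (x - y) * Real.exp M := mul_le_mul_of_nonneg_left hxM (by linarith)

lemma rpow_eq_cfc_real' {a : A} (ha : 0 ≤ a) {β : ℝ} (hβ : β ≠ 0) :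
    a ^ β = cfc (fun t : ℝ => t ^ β) a := by
  rw [CFC.rpow_def, cfc_nnreal_eq_real _ a ha]
  apply cfc_congr
  intro x hx
  have hx0 : 0 ≤ x := spectrum_nonneg_of_nonneg ha hx
  simp only [NNReal.coe_rpow, Real.coe_toNNReal x hx0]

lemma tendsto_cfc_rpow_exponent {a : A} (ha : 0 ≤ a) (hau : IsUnit a) {β : ℝ}
    {u : ℕ → ℝ} (hu0 : ∀ n, 0 ≤ u n) (hu1 : ∀ n, u n ≤ 1)
    (hβ0 : 0 ≤ β) (hβ1 : β ≤ 1)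
    (huβ : Tendsto u atTop (nhds β)) :
    Tendsto (fun n => cfc (fun t : ℝ => t ^ u n) a) atTop
      (nhds (cfc (fun t : ℝ => t ^ β) a)) := by
  obtain ⟨ε₀, hε₀, hlow⟩ : ∃ ε₀ > 0, ∀ t ∈ spectrum ℝ a, ε₀ ≤ t := by
    rcases (spectrum ℝ a).eq_empty_or_nonempty with h | h
    · exact ⟨1, one_pos, by simp [h]⟩
    · obtain ⟨t₀, ht₀, hmin⟩ := (spectrum.isCompact (𝕜 := ℝ) a).exists_isMinOn h
        continuousOn_id
      refine ⟨t₀, ?_, fun t ht => hmin ht⟩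
      rcases (spectrum_nonneg_of_nonneg ha ht₀).lt_or_eq with h0 | h0
      · exact h0
      · exact absurd (h0 ▸ ht₀) ((spectrum.zero_notMem_iff ℝ).mpr hau)
  set L : ℝ := max |Real.log ε₀| |Real.log ‖a‖| with hL
  have hL0 : 0 ≤ L := le_trans (abs_nonneg _) (le_max_left _ _)
  have hlog : ∀ t ∈ spectrum ℝ a, |Real.log t| ≤ L := by
    intro t ht
    have h1 : ε₀ ≤ t := hlow t ht
    have htpos : 0 < t := lt_of_lt_of_le hε₀ h1
    have h2 : t ≤ ‖a‖ := by
      have := spectrum.norm_le_norm_of_mem ht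
      rw [Real.norm_eq_abs] at this
      exact le_trans (le_abs_self t) this
    rw [abs_le]
    constructor
    · calc -L ≤ -|Real.log ε₀| := neg_le_neg (le_max_left _ _)
      _ ≤ Real.log ε₀ := neg_abs_le _
      _ ≤ Real.log t := Real.log_le_log hε₀ h1
    · calc Real.log t ≤ Real.log ‖a‖ := Real.log_le_log htpos h2
      _ ≤ |Real.log ‖a‖| := le_abs_self _
      _ ≤ L := le_max_right _ _
  have hcontm : ∀ x : ℝ, 0 ≤ x → Continuous (fun t : ℝ => t ^ x) := by
    intro x hx
    rw [continuous_iff_continuousAt]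
    exact fun t => Real.continuousAt_rpow_const t x (Or.inr hx)
  have key : ∀ n, ‖cfc (fun t : ℝ => t ^ u n) a - cfc (fun t : ℝ => t ^ β) a‖
      ≤ |u n - β| * (L * Real.exp L) := by
    intro n
    rw [← cfc_sub _ _ a ((hcontm _ (hu0 n)).continuousOn) ((hcontm _ hβ0).continuousOn)]
    apply norm_cfc_le (by positivity)
    intro t ht
    have htpos : 0 < t := lt_of_lt_of_le hε₀ (hlow t ht)
    rw [Real.norm_eq_abs, Real.rpow_def_of_pos htpos, Real.rpow_def_of_pos htpos]
    have hlt : |Real.log t| ≤ L := hlog t ht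
    have hb1 : |Real.log t * u n| ≤ L := by
      rw [abs_mul]
      calc |Real.log t| * |u n| ≤ L * 1 := by
            apply mul_le_mul hlt _ (abs_nonneg _) hL0
            rw [abs_of_nonneg (hu0 n)]; exact hu1 n
      _ = L := mul_one L
    have hb2 : |Real.log t * β| ≤ L := by
      rw [abs_mul]
      calc |Real.log t| * |β| ≤ L * 1 := by
            apply mul_le_mul hlt _ (abs_nonneg _) hL0
            rw [abs_of_nonneg hβ0]; exact hβ1
      _ = L := mul_one L
    calc |Real.exp (Real.log t * u n) - Real.exp (Real.log t * β)|
        ≤ |Real.log t * u n - Real.log t * β| * Real.exp L :=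
          abs_exp_sub_exp_le' hb1 hb2
      _ = |Real.log t| * |u n - β| * Real.exp L := by
          rw [← mul_sub, abs_mul]
      _ ≤ L * |u n - β| * Real.exp L := by
          apply mul_le_mul_of_nonneg_right _ (Real.exp_pos L).le
          exact mul_le_mul_of_nonneg_right hlt (abs_nonneg _)
      _ = |u n - β| * (L * Real.exp L) := by ring
  rw [tendsto_iff_norm_sub_tendsto_zero]
  apply squeeze_zero (fun n => norm_nonneg _) key
  have h0 : Tendsto (fun n => u n - β) atTop (nhds 0) := by
    simpa using huβ.sub (tendsto_const_nhds (x := β))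
  have := h0.abs.mul_const (L * Real.exp L)
  simpa using this

end CStar

section CStar
variable {A : Type*} [CStarAlgebra A] [PartialOrder A] [StarOrderedRing A]

lemma cfc_rpow_le_cfc_rpow_unit [Nontrivial A] {a b : A} (ha : 0 ≤ a) (hb : 0 ≤ b)
    (hau : IsUnit a) (hbu : IsUnit b) (hab : a ≤ b) {β : ℝ} (hβ0 : 0 < β) (hβ1 : β ≤ 1) :
    cfc (fun t : ℝ => t ^ β) a ≤ cfc (fun t : ℝ => t ^ β) b := by
  set k : ℕ → ℕ := fun n => ⌊β * 2 ^ n⌋₊ with hk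
  have hk2 : ∀ n, k n ≤ 2 ^ n := by
    intro n
    have h1 : β * 2 ^ n ≤ ((2 ^ n : ℕ) : ℝ) := by
      push_cast
      nlinarith [pow_pos (show (0:ℝ) < 2 by norm_num) n]
    calc k n ≤ ⌊((2 ^ n : ℕ) : ℝ)⌋₊ := Nat.floor_le_floor h1
    _ = 2 ^ n := Nat.floor_natCast _
  set u : ℕ → ℝ := fun n => (k n : ℝ) / 2 ^ n with hu
  have hu0 : ∀ n, 0 ≤ u n := fun n => by positivity
  have hu1 : ∀ n, u n ≤ 1 := by
    intro n
    rw [hu, div_le_one (by positivity)]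
    exact_mod_cast hk2 n
  have hble : ∀ n, β - (1/2) ^ n ≤ u n := by
    intro n
    have h1 : β * 2 ^ n < (k n : ℝ) + 1 := Nat.lt_floor_add_one _
    have h2 : (0:ℝ) < 2 ^ n := by positivity
    show β - (1/2) ^ n ≤ (k n : ℝ) / 2 ^ n
    have h3 : (1/2:ℝ) ^ n * 2 ^ n = 1 := by rw [← mul_pow]; norm_num
    have h4 : (β - (1/2) ^ n) * 2 ^ n ≤ (k n : ℝ) := by nlinarith
    calc β - (1/2) ^ n = (β - (1/2) ^ n) * 2 ^ n / 2 ^ n := by field_simp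
    _ ≤ (k n : ℝ) / 2 ^ n := by gcongr
  have huble : ∀ n, u n ≤ β := by
    intro n
    rw [hu, div_le_iff₀ (by positivity)]
    exact Nat.floor_le (by positivity)
  have huβ : Tendsto u atTop (nhds β) := by
    apply tendsto_of_tendsto_of_tendsto_of_le_of_le (g := fun n => β - (1/2)^n)
      (h := fun _ => β) ?_ tendsto_const_nhds hble huble
    have : Tendsto (fun n : ℕ => (1/2 : ℝ) ^ n) atTop (nhds 0) :=
      tendsto_pow_atTop_nhds_zero_of_lt_one (by norm_num) (by norm_num)
    simpa using (tendsto_const_nhds (x := β)).sub this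
  have hstep : ∀ n, cfc (fun t : ℝ => t ^ u n) a ≤ cfc (fun t : ℝ => t ^ u n) b := by
    intro n
    rcases eq_or_ne (u n) 0 with h | h
    · have heq : (fun t : ℝ => t ^ u n) = fun _ : ℝ => (1:ℝ) := by
        funext t; rw [h, Real.rpow_zero]
      rw [heq, cfc_const 1 a (IsSelfAdjoint.of_nonneg ha),
        cfc_const 1 b (IsSelfAdjoint.of_nonneg hb)]
    · rw [← rpow_eq_cfc_real' ha h, ← rpow_eq_cfc_real' hb h]
      exact rpow_le_rpow_dyadic n (k n) (hk2 n) a b ha hb hau hbu hab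
  have hta := tendsto_cfc_rpow_exponent ha hau hu0 hu1 hβ0.le hβ1 huβ
  have htb := tendsto_cfc_rpow_exponent hb hbu hu0 hu1 hβ0.le hβ1 huβ
  have hmem : cfc (fun t : ℝ => t ^ β) b - cfc (fun t : ℝ => t ^ β) a ∈ {x : A | 0 ≤ x} :=
    IsClosed.mem_of_tendsto CStarAlgebra.isClosed_nonneg (htb.sub hta)
      (Filter.Eventually.of_forall fun n => by
        simpa using sub_nonneg.mpr (hstep n))
  exact sub_nonneg.mp hmem

lemma cfc_rpow_le_cfc_rpow {a b : A} (ha : 0 ≤ a) (hab : a ≤ b) {β : ℝ}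
    (hβ0 : 0 < β) (hβ1 : β ≤ 1) :
    cfc (fun t : ℝ => t ^ β) a ≤ cfc (fun t : ℝ => t ^ β) b := by
  rcases subsingleton_or_nontrivial A with hs | hnt
  · exact le_of_eq (Subsingleton.elim _ _)
  have hb : 0 ≤ b := ha.trans hab
  set e : ℕ → ℝ := fun n => 1 / ((n : ℝ) + 1) with he
  have hepos : ∀ n, 0 < e n := fun n => by positivity
  have hcontm : ∀ x : ℝ, 0 ≤ x → Continuous (fun t : ℝ => t ^ x) := by
    intro x hx
    rw [continuous_iff_continuousAt]
    exact fun t => Real.continuousAt_rpow_const t x (Or.inr hx)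
  have halg : ∀ ε : ℝ, 0 ≤ ε → 0 ≤ algebraMap ℝ A ε := by
    intro ε hε
    have h1 : algebraMap ℝ A ε
        = star (algebraMap ℝ A (Real.sqrt ε)) * algebraMap ℝ A (Real.sqrt ε) := by
      rw [← algebraMap_star_comm, star_trivial, ← map_mul, Real.mul_self_sqrt hε]
    rw [h1]
    exact star_mul_self_nonneg _
  have hnn : ∀ (x : A), 0 ≤ x → ∀ ε : ℝ, 0 ≤ ε → 0 ≤ x + algebraMap ℝ A ε := by
    intro x hx ε hε
    exact add_nonneg hx (halg ε hε)
  have hun : ∀ (x : A), 0 ≤ x → ∀ ε : ℝ, 0 < ε → IsUnit (x + algebraMap ℝ A ε) := by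
    intro x hx ε hε
    apply CStarAlgebra.isUnit_of_le _ ?_ ((IsUnit.map (algebraMap ℝ A) (isUnit_iff_ne_zero.mpr hε.ne')).isStrictlyPositive
      (halg ε hε.le))
    calc algebraMap ℝ A ε = 0 + algebraMap ℝ A ε := (zero_add _).symm
    _ ≤ x + algebraMap ℝ A ε := add_le_add hx le_rfl
  have key : ∀ n, cfc (fun t : ℝ => t ^ β) (a + algebraMap ℝ A (e n))
      ≤ cfc (fun t : ℝ => t ^ β) (b + algebraMap ℝ A (e n)) := fun n =>
    cfc_rpow_le_cfc_rpow_unit (hnn a ha _ (hepos n).le) (hnn b hb _ (hepos n).le)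
      (hun a ha _ (hepos n)) (hun b hb _ (hepos n)) (add_le_add hab le_rfl) hβ0 hβ1
  have htrans : ∀ (x : A), 0 ≤ x → ∀ ε : ℝ, 0 ≤ ε →
      cfc (fun t : ℝ => t ^ β) (x + algebraMap ℝ A ε)
        = cfc (fun t : ℝ => (t + ε) ^ β) x := by
    intro x hx ε hε
    have hxsa : IsSelfAdjoint x := IsSelfAdjoint.of_nonneg hx
    have h1 : cfc (fun t : ℝ => t + ε) x = x + algebraMap ℝ A ε := by
      have h2 : (fun t : ℝ => t + ε) = fun t : ℝ => id t + (fun _ : ℝ => ε) t := rfl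
      rw [h2, cfc_add x _ _ continuous_id.continuousOn continuous_const.continuousOn,
        cfc_id ℝ x hxsa, cfc_const ε x hxsa]
    calc cfc (fun t : ℝ => t ^ β) (x + algebraMap ℝ A ε)
        = cfc (fun t : ℝ => t ^ β) (cfc (fun t : ℝ => t + ε) x) := by rw [h1]
      _ = cfc ((fun t : ℝ => t ^ β) ∘ (fun t : ℝ => t + ε)) x := by
          have hfc : Continuous (fun t : ℝ => t + ε) := by fun_prop
          rw [cfc_comp _ _ x hxsa ((hcontm β hβ0.le).continuousOn) hfc.continuousOn]
      _ = cfc (fun t : ℝ => (t + ε) ^ β) x := rfl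
  have hnb : ∀ (x : A), 0 ≤ x → ∀ ε : ℝ, 0 < ε →
      ‖cfc (fun t : ℝ => t ^ β) (x + algebraMap ℝ A ε)
        - cfc (fun t : ℝ => t ^ β) x‖ ≤ ε ^ β := by
    intro x hx ε hε
    have hc1 : Continuous (fun t : ℝ => (t + ε) ^ β) :=
      (continuous_id.add continuous_const).rpow_const (fun x => Or.inr hβ0.le)
    rw [htrans x hx ε hε.le,
      ← cfc_sub (fun t : ℝ => (t + ε) ^ β) (fun t : ℝ => t ^ β) x hc1.continuousOn
        ((hcontm β hβ0.le)).continuousOn]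
    apply norm_cfc_le (Real.rpow_nonneg hε.le β)
    intro t ht
    have ht0 : 0 ≤ t := spectrum_nonneg_of_nonneg hx ht
    rw [Real.norm_eq_abs,
      abs_of_nonneg (sub_nonneg.mpr (Real.rpow_le_rpow ht0 (by linarith) hβ0.le))]
    have hr : (t + ε) ^ β ≤ t ^ β + ε ^ β := by
      have h1 := NNReal.rpow_add_le_add_rpow (Real.toNNReal t) (Real.toNNReal ε) hβ0.le hβ1
      rw [← Real.toNNReal_add ht0 hε.le] at h1
      have h2 := NNReal.coe_le_coe.mpr h1
      push_cast [NNReal.coe_rpow] at h2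
      rwa [Real.coe_toNNReal _ (by positivity), Real.coe_toNNReal _ ht0,
        Real.coe_toNNReal _ hε.le] at h2
    linarith
  have hlim : ∀ (x : A), 0 ≤ x →
      Tendsto (fun n => cfc (fun t : ℝ => t ^ β) (x + algebraMap ℝ A (e n))) atTop
        (nhds (cfc (fun t : ℝ => t ^ β) x)) := by
    intro x hx
    rw [tendsto_iff_norm_sub_tendsto_zero]
    apply squeeze_zero (fun n => norm_nonneg _) (fun n => hnb x hx (e n) (hepos n))
    have h1 : Tendsto e atTop (nhds 0) := tendsto_one_div_add_atTop_nhds_zero_nat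
    have h2 := (Real.continuousAt_rpow_const 0 β (Or.inr hβ0.le)).tendsto.comp h1
    simpa [Function.comp_def, Real.zero_rpow hβ0.ne'] using h2
  have hmem : cfc (fun t : ℝ => t ^ β) b - cfc (fun t : ℝ => t ^ β) a ∈ {x : A | 0 ≤ x} :=
    IsClosed.mem_of_tendsto CStarAlgebra.isClosed_nonneg ((hlim b hb).sub (hlim a ha))
      (Filter.Eventually.of_forall fun n => by simpa using sub_nonneg.mpr (key n))
  exact sub_nonneg.mp hmem

end CStar
section CStar
variable {A : Type*} [CStarAlgebra A] [PartialOrder A] [StarOrderedRing A] [Nontrivial A]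

lemma cfc_conj_idem {a p : A} (ha : IsSelfAdjoint a) (hpsa : IsSelfAdjoint p)
    (hp2 : p * p = p) (hpa : a * p = p * a) {f : ℝ → ℝ} (hf : Continuous f) (hf0 : f 0 = 0) :
    cfc f (p * a * p) = p * cfc f a * p := by
  have hq : p * a * p = a * p := by rw [← hpa, mul_assoc, hp2]
  have hqsa : IsSelfAdjoint (p * a * p) := by
    rw [IsSelfAdjoint, star_mul, star_mul, hpsa.star_eq, ha.star_eq, ← mul_assoc]
  set R : ℝ := max ‖a‖ ‖p * a * p‖ with hR
  have hR0 : 0 ≤ R := le_trans (norm_nonneg a) (le_max_left _ _)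
  have hspec1 : spectrum ℝ a ⊆ Set.Icc (-R) R := by
    intro t ht
    have h1 := spectrum.norm_le_norm_of_mem ht
    rw [Real.norm_eq_abs] at h1
    have h2 : |t| ≤ R := h1.trans (le_max_left _ _)
    exact abs_le.mp h2
  have hspec2 : spectrum ℝ (p * a * p) ⊆ Set.Icc (-R) R := by
    intro t ht
    have h1 := spectrum.norm_le_norm_of_mem ht
    rw [Real.norm_eq_abs] at h1
    have h2 : |t| ≤ R := h1.trans (le_max_right _ _)
    exact abs_le.mp h2
  set D : A := cfc f (p * a * p) - p * cfc f a * p with hD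
  have main : ∀ ε : ℝ, 0 < ε → ‖D‖ ≤ ε * (2 * (1 + ‖p‖ * ‖p‖)) := by
    intro ε hε
    obtain ⟨Q₀, hQ₀⟩ := exists_polynomial_near_of_continuousOn (-R) R f hf.continuousOn ε hε
    set Q : Polynomial ℝ := Q₀ - Polynomial.C (Q₀.eval 0) with hQdef
    have hQ0 : Q.coeff 0 = 0 := by
      simp [hQdef, Polynomial.coeff_zero_eq_eval_zero]
    have h0mem : (0:ℝ) ∈ Set.Icc (-R) R := by constructor <;> linarith
    have hQnear : ∀ t ∈ Set.Icc (-R) R, |Q.eval t - f t| ≤ 2 * ε := by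
      intro t ht
      have h1 := hQ₀ t ht
      have h2 := hQ₀ 0 h0mem
      rw [hf0, sub_zero] at h2
      have h3 : Q.eval t - f t = (Q₀.eval t - f t) - Q₀.eval 0 := by
        simp only [hQdef, Polynomial.eval_sub, Polynomial.eval_C]
        ring
      rw [h3]
      calc |(Q₀.eval t - f t) - Q₀.eval 0| ≤ |Q₀.eval t - f t| + |Q₀.eval 0| := abs_sub _ _
      _ ≤ 2 * ε := by linarith
    have hpoly : cfc (fun t : ℝ => Q.eval t) (p * a * p)
        = p * cfc (fun t : ℝ => Q.eval t) a * p := by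
      rw [cfc_poly_eval Q _ hqsa, cfc_poly_eval Q a ha, hq, aeval_mul_idem hp2 hpa Q hQ0]
    have hb1 : ‖cfc f (p * a * p) - cfc (fun t : ℝ => Q.eval t) (p * a * p)‖ ≤ 2 * ε := by
      rw [← cfc_sub f (fun t : ℝ => Q.eval t) (p * a * p) hf.continuousOn
        Q.continuous.continuousOn]
      apply norm_cfc_le (by positivity)
      intro t ht
      rw [Real.norm_eq_abs, abs_sub_comm]
      exact hQnear t (hspec2 ht)
    have hb2 : ‖cfc (fun t : ℝ => Q.eval t) a - cfc f a‖ ≤ 2 * ε := by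
      rw [← cfc_sub (fun t : ℝ => Q.eval t) f a Q.continuous.continuousOn hf.continuousOn]
      apply norm_cfc_le (by positivity)
      intro t ht
      rw [Real.norm_eq_abs]
      exact hQnear t (hspec1 ht)
    have hdecomp : D = (cfc f (p * a * p) - cfc (fun t : ℝ => Q.eval t) (p * a * p))
        + (p * (cfc (fun t : ℝ => Q.eval t) a - cfc f a) * p) := by
      have h4 : p * (cfc (fun t : ℝ => Q.eval t) a - cfc f a) * p
          = cfc (fun t : ℝ => Q.eval t) (p * a * p) - p * cfc f a * p := by
        rw [mul_sub, sub_mul, hpoly]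
      rw [hD, h4]
      abel
    calc ‖D‖ ≤ ‖cfc f (p * a * p) - cfc (fun t : ℝ => Q.eval t) (p * a * p)‖
        + ‖p * (cfc (fun t : ℝ => Q.eval t) a - cfc f a) * p‖ := by
          rw [hdecomp]; exact norm_add_le _ _
    _ ≤ 2 * ε + ‖p‖ * (2 * ε) * ‖p‖ := by
        apply add_le_add hb1
        calc ‖p * (cfc (fun t : ℝ => Q.eval t) a - cfc f a) * p‖
            ≤ ‖p * (cfc (fun t : ℝ => Q.eval t) a - cfc f a)‖ * ‖p‖ := norm_mul_le _ _
        _ ≤ ‖p‖ * ‖cfc (fun t : ℝ => Q.eval t) a - cfc f a‖ * ‖p‖ := by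
            apply mul_le_mul_of_nonneg_right (norm_mul_le _ _) (norm_nonneg _)
        _ ≤ ‖p‖ * (2 * ε) * ‖p‖ := by
            apply mul_le_mul_of_nonneg_right _ (norm_nonneg _)
            exact mul_le_mul_of_nonneg_left hb2 (norm_nonneg _)
    _ = ε * (2 * (1 + ‖p‖ * ‖p‖)) := by ring
  have hnorm0 : ‖D‖ ≤ 0 := by
    by_contra hcon
    push_neg at hcon
    set c : ℝ := 2 * (1 + ‖p‖ * ‖p‖) with hc
    have hcpos : 0 < c := by positivity
    have h2 := main (‖D‖ / (2 * c)) (by positivity)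
    have h3 : ‖D‖ / (2 * c) * c = ‖D‖ / 2 := by
      field_simp
    rw [h3] at h2
    linarith
  have : D = 0 := norm_le_zero_iff.mp hnorm0
  rw [hD] at this
  exact sub_eq_zero.mp this

end CStar

end LoewnerHeinzAux

/-- If `N ≤ T ≤ D` on `ℓ²(ℤ)` with `N, D` block-diagonal w.r.t. `ℓ²(Λ) ⊕ ℓ²(Λᶜ)` and
`N` positive, then for `β ∈ (0,1]` one has `N₁^β ≤ 1_Λ T^β 1_Λ ≤ D₁^β` on `ℓ²(Λ)`,
where `N₁ = 1_Λ N 1_Λ`, `D₁ = 1_Λ D 1_Λ` and powers are given by functional calculus. -/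
theorem power_bracketing_blockDiagonal
    (Λ : Set ℤ) (P : lp (fun _ : ℤ => ℂ) 2 →L[ℂ] lp (fun _ : ℤ => ℂ) 2)
    (hP : ∀ (x : lp (fun _ : ℤ => ℂ) 2) (n : ℤ), P x n = Λ.indicator (fun m => x m) n)
    (T N D : lp (fun _ : ℤ => ℂ) 2 →L[ℂ] lp (fun _ : ℤ => ℂ) 2)
    (hT : IsSelfAdjoint T) (hN : IsSelfAdjoint N) (hD : IsSelfAdjoint D)
    (hT0 : 0 ≤ T) (hN0 : 0 ≤ N)
    (hNcomm : N * P = P * N) (hDcomm : D * P = P * D)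
    (hNT : N ≤ T) (hTD : T ≤ D)
    (β : ℝ) (hβ0 : 0 < β) (hβ1 : β ≤ 1) :
    cfc (fun t : ℝ => t ^ β) (P * N * P) ≤ P * cfc (fun t : ℝ => t ^ β) T * P ∧
      P * cfc (fun t : ℝ => t ^ β) T * P ≤ cfc (fun t : ℝ => t ^ β) (P * D * P) := by
  haveI hlpnt : Nontrivial (lp (fun _ : ℤ => ℂ) 2) := by
    refine ⟨lp.single 2 (0:ℤ) (1:ℂ), 0, fun h => ?_⟩
    have h1 : (lp.single (E := fun _ : ℤ => ℂ) 2 (0:ℤ) (1:ℂ)) 0 = 1 :=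
      lp.single_apply_self _ _ _
    rw [h] at h1
    simp only [lp.coeFn_zero, Pi.zero_apply] at h1
    exact one_ne_zero h1.symm
  haveI : Nontrivial (lp (fun _ : ℤ => ℂ) 2 →L[ℂ] lp (fun _ : ℤ => ℂ) 2) := by
    obtain ⟨x, hx⟩ := exists_ne (0 : lp (fun _ : ℤ => ℂ) 2)
    exact ⟨1, 0, fun h => hx (by simpa using DFunLike.congr_fun h x)⟩
  obtain ⟨hPsa, hP2⟩ := lp_proj_selfAdjoint_idem Λ P hP
  have hf : Continuous (fun t : ℝ => t ^ β) := by
    rw [continuous_iff_continuousAt]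
    exact fun x => Real.continuousAt_rpow_const x β (Or.inr hβ0.le)
  have hf0 : (0 : ℝ) ^ β = 0 := Real.zero_rpow hβ0.ne'
  have hNf : cfc (fun t : ℝ => t ^ β) (P * N * P) = P * cfc (fun t : ℝ => t ^ β) N * P :=
    cfc_conj_idem hN hPsa hP2 hNcomm hf hf0
  have hDf : cfc (fun t : ℝ => t ^ β) (P * D * P) = P * cfc (fun t : ℝ => t ^ β) D * P :=
    cfc_conj_idem hD hPsa hP2 hDcomm hf hf0
  have hNT' := cfc_rpow_le_cfc_rpow hN0 hNT hβ0 hβ1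
  have hTD' := cfc_rpow_le_cfc_rpow hT0 hTD hβ0 hβ1
  constructor
  · rw [hNf]
    have := star_left_conjugate_le_conjugate hNT' P
    simp only [hPsa.star_eq] at this
    exact this
  · rw [hDf]
    have := star_left_conjugate_le_conjugate hTD' P
    simp only [hPsa.star_eq] at this
    exact this
end
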